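/- arXiv:math/0701589 — 4 statements merged into one kernel-verified Lean document; each statement's English description precedes it below -/
import Mathlib

section
/- The Lebesgue measure of the mixed triangle S₀ = {x ∈ ℝ² : ‖x − K‖ ≤ 1, ‖x − L‖ ≤ 1, x₂ ≥ 0}, where K = (0,0) and L = (1,0), equals π/3 − √3/4 (equivalently (8π − 6√3)/24). -/
open MeasureTheory Real Set

noncomputable def pt (a b : ℝ) : EuclideanSpace ℝ (Fin 2) :=
  (WithLp.equiv 2 (Fin 2 → ℝ)).symm ![a, b]

lemma norm_le_one_iff (x : EuclideanSpace ℝ (Fin 2)) (a b : ℝ) :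
    ‖x - pt a b‖ ≤ 1 ↔ (x 0 - a)^2 + (x 1 - b)^2 ≤ 1 := by
  have h0 : (x - pt a b) 0 = x 0 - a := by simp [pt]
  have h1 : (x - pt a b) 1 = x 1 - b := by simp [pt]
  rw [EuclideanSpace.norm_eq, Fin.sum_univ_two, h0, h1]
  simp only [Real.norm_eq_abs, sq_abs]
  constructor
  · intro h
    have hnn : (0:ℝ) ≤ (x 0 - a)^2 + (x 1 - b)^2 := by positivity
    nlinarith [Real.sq_sqrt hnn, Real.sqrt_nonneg ((x 0 - a)^2 + (x 1 - b)^2)]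
  · intro h
    calc Real.sqrt ((x 0 - a)^2 + (x 1 - b)^2) ≤ Real.sqrt 1 := Real.sqrt_le_sqrt h
      _ = 1 := Real.sqrt_one

lemma arcsin_sqrt3_div_2 : Real.arcsin (Real.sqrt 3 / 2) = π / 3 := by
  rw [← Real.sin_pi_div_three]
  exact Real.arcsin_sin (by linarith [Real.pi_pos]) (by linarith [Real.pi_pos])

lemma cont_integrand : Continuous fun y : ℝ => 2 * Real.sqrt (1 - y^2) - 1 := by
  have h : Continuous fun y : ℝ => (1 - y^2) := by fun_prop
  exact (continuous_const.mul (Real.continuous_sqrt.comp h)).sub continuous_const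

lemma key_integral :
    ∫ y in (0:ℝ)..(Real.sqrt 3 / 2), (2 * Real.sqrt (1 - y^2) - 1) =
      π / 3 - Real.sqrt 3 / 4 := by
  have h3 : (Real.sqrt 3)^2 = 3 := Real.sq_sqrt (by norm_num)
  have hs3 : (0:ℝ) ≤ Real.sqrt 3 := Real.sqrt_nonneg 3
  have hle : (0:ℝ) ≤ Real.sqrt 3 / 2 := by positivity
  have hF : ∀ y ∈ Set.uIcc (0:ℝ) (Real.sqrt 3 / 2),
      HasDerivAt (fun t => t * Real.sqrt (1 - t^2) + Real.arcsin t - t)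
        (2 * Real.sqrt (1 - y^2) - 1) y := by
    intro y hy
    rw [Set.uIcc_of_le hle, Set.mem_Icc] at hy
    have hs3lt : Real.sqrt 3 < 2 := by nlinarith
    have hy2 : (0:ℝ) < 1 - y^2 := by nlinarith [hy.1, hy.2]
    have hspos : (0:ℝ) < Real.sqrt (1 - y^2) := Real.sqrt_pos.mpr hy2
    have hs2 : (Real.sqrt (1 - y^2))^2 = 1 - y^2 := Real.sq_sqrt hy2.le
    have hd1 : HasDerivAt (fun t : ℝ => 1 - t^2) (-(2*y)) y := by
      simpa using ((hasDerivAt_pow 2 y).const_sub 1)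
    have hsq : HasDerivAt (fun t => Real.sqrt (1 - t^2))
        (1 / (2 * Real.sqrt (1 - y^2)) * (-(2*y))) y :=
      (Real.hasDerivAt_sqrt (ne_of_gt hy2)).comp y hd1
    have hmul : HasDerivAt (fun t => t * Real.sqrt (1 - t^2))
        (1 * Real.sqrt (1 - y^2) + y * (1 / (2 * Real.sqrt (1 - y^2)) * (-(2*y)))) y :=
      (hasDerivAt_id y).mul hsq
    have hyn1 : y ≠ -1 := by nlinarith [hy.1]
    have hy1 : y ≠ 1 := by nlinarith [hy.2]
    have harc : HasDerivAt Real.arcsin (1 / Real.sqrt (1 - y^2)) y :=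
      Real.hasDerivAt_arcsin hyn1 hy1
    have := ((hmul.add harc).sub (hasDerivAt_id y))
    convert! this using 1
    have hne := ne_of_gt hspos
    field_simp
    nlinarith [hs2]
  rw [intervalIntegral.integral_eq_sub_of_hasDerivAt hF
    (cont_integrand.intervalIntegrable 0 (Real.sqrt 3 / 2))]
  have hval : Real.sqrt (1 - (Real.sqrt 3 / 2)^2) = 1/2 := by
    have : 1 - (Real.sqrt 3 / 2)^2 = 1/4 := by rw [div_pow, h3]; norm_num
    rw [this]
    rw [show (1:ℝ)/4 = (1/2)^2 by norm_num, Real.sqrt_sq (by norm_num)]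
  simp only [hval, arcsin_sqrt3_div_2]
  simp [Real.arcsin_zero]
  ring

theorem mixed_triangle_area :
    volume {x : EuclideanSpace ℝ (Fin 2) |
        ‖x - pt 0 0‖ ≤ 1 ∧ ‖x - pt 1 0‖ ≤ 1 ∧ 0 ≤ x 1} =
      ENNReal.ofReal (π / 3 - Real.sqrt 3 / 4) := by
  have h3 : (Real.sqrt 3)^2 = 3 := Real.sq_sqrt (by norm_num)
  have hs3 : (0:ℝ) ≤ Real.sqrt 3 := Real.sqrt_nonneg 3
  set S2 : Set (ℝ × ℝ) :=
    {p : ℝ × ℝ | p.1^2 + p.2^2 ≤ 1 ∧ (p.1 - 1)^2 + p.2^2 ≤ 1 ∧ 0 ≤ p.2} with hS2def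
  have hmeas : MeasurableSet S2 := by
    rw [hS2def]
    simp only [Set.setOf_and]
    exact (measurableSet_le (by fun_prop) measurable_const).inter
      ((measurableSet_le (by fun_prop) measurable_const).inter
        (measurableSet_le measurable_const (by fun_prop)))
  have hmp := (volume_preserving_finTwoArrow ℝ).comp
    (EuclideanSpace.volume_preserving_symm_measurableEquiv_toLp (Fin 2))
  have hpre : {x : EuclideanSpace ℝ (Fin 2) |
        ‖x - pt 0 0‖ ≤ 1 ∧ ‖x - pt 1 0‖ ≤ 1 ∧ 0 ≤ x 1} =
      (⇑(MeasurableEquiv.finTwoArrow) ∘ ⇑(MeasurableEquiv.toLp 2 (Fin 2 → ℝ)).symm) ⁻¹' S2 := by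
    ext x
    simp only [Set.mem_setOf_eq, Set.mem_preimage, Function.comp_apply,
      MeasurableEquiv.finTwoArrow_apply, hS2def, norm_le_one_iff]
    norm_num
  rw [hpre, hmp.measure_preimage hmeas.nullMeasurableSet]
  rw [Measure.volume_eq_prod, Measure.prod_apply_symm hmeas]
  have hslice : ∀ y : ℝ, volume ((fun x => (x, y)) ⁻¹' S2) =
      Set.indicator (Icc 0 (Real.sqrt 3 / 2))
        (fun y => ENNReal.ofReal (2 * Real.sqrt (1 - y^2) - 1)) y := by
    intro y
    by_cases hy : y ∈ Icc 0 (Real.sqrt 3 / 2)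
    · rw [Set.indicator_of_mem hy]
      rw [Set.mem_Icc] at hy
      have hy2 : y^2 ≤ 3/4 := by nlinarith [hy.1, hy.2]
      have h14 : (0:ℝ) < 1 - y^2 := by linarith
      set c := Real.sqrt (1 - y^2) with hc
      have hc2 : c^2 = 1 - y^2 := Real.sq_sqrt h14.le
      have hc0 : 0 < c := Real.sqrt_pos.mpr h14
      have hchalf : (1:ℝ)/2 ≤ c := by
        rw [hc]
        rw [show (1:ℝ)/2 = Real.sqrt (1/4) by
          rw [show (1:ℝ)/4 = (1/2)^2 by norm_num, Real.sqrt_sq]; norm_num]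
        exact Real.sqrt_le_sqrt (by linarith)
      have hc1 : c ≤ 1 := by nlinarith [hy.1]
      have h1 : (fun x => (x, y)) ⁻¹' S2 = Icc (1 - c) c := by
        ext x
        simp only [Set.mem_preimage, hS2def, Set.mem_setOf_eq, Set.mem_Icc]
        constructor
        · rintro ⟨ha, hb, -⟩
          constructor <;> nlinarith
        · rintro ⟨ha, hb⟩
          refine ⟨by nlinarith, by nlinarith, hy.1⟩
      rw [h1, Real.volume_Icc]
      congr 1
      ring
    · rw [Set.indicator_of_notMem hy]
      have h1 : (fun x => (x, y)) ⁻¹' S2 = ∅ := by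
        ext x
        simp only [Set.mem_preimage, hS2def, Set.mem_setOf_eq, Set.mem_empty_iff_false,
          iff_false, not_and]
        intro ha hb
        rw [Set.mem_Icc, not_and_or, not_le, not_le] at hy
        intro hy0
        have hgt : Real.sqrt 3 / 2 < y := by
          rcases hy with h | h
          · linarith
          · exact h
        nlinarith [sq_nonneg (2*x - 1)]
      rw [h1, measure_empty]
  simp_rw [hslice]
  rw [lintegral_indicator measurableSet_Icc]
  rw [← ofReal_integral_eq_lintegral_ofReal]
  · rw [MeasureTheory.integral_Icc_eq_integral_Ioc,
      ← intervalIntegral.integral_of_le (by positivity), key_integral]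
  · exact cont_integrand.integrableOn_Icc.integrable
  · filter_upwards [ae_restrict_mem measurableSet_Icc] with y hy
    rw [Set.mem_Icc] at hy
    have hy2 : y^2 ≤ 3/4 := by nlinarith [hy.1, hy.2]
    have : (1:ℝ)/2 ≤ Real.sqrt (1 - y^2) := by
      rw [show (1:ℝ)/2 = Real.sqrt (1/4) by
        rw [show (1:ℝ)/4 = (1/2)^2 by norm_num, Real.sqrt_sq]; norm_num]
      exact Real.sqrt_le_sqrt (by linarith)
    simp only [Pi.zero_apply]
    linarith
end

section
/- Let S₀ = {x ∈ ℝ² : ‖x − K‖ ≤ 1, ‖x − L‖ ≤ 1, x₂ ≥ 0}, where K = (0,0) and L = (1,0), and let D = closedBall((1/2, 0), 1/2). Then the Lebesgue measure of S₀ \ D equals (5π − 6√3)/24. -/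
open MeasureTheory Real

namespace MixedAux

noncomputable def f (x : ℝ) : ℝ := min (Real.sqrt (1 - x^2)) (Real.sqrt (1 - (x-1)^2))

noncomputable def g (x : ℝ) : ℝ := Real.sqrt (1/4 - (x - 1/2)^2)

/-- The target set in ℝ × ℝ. -/
def T : Set (ℝ × ℝ) :=
  {p | (p.1^2 + p.2^2 ≤ 1 ∧ (p.1 - 1)^2 + p.2^2 ≤ 1 ∧ 0 ≤ p.2) ∧
       ¬((p.1 - 1/2)^2 + p.2^2 ≤ 1/4)}

lemma measurableSet_T : MeasurableSet T := by
  have m1 : MeasurableSet {p : ℝ × ℝ | p.1^2 + p.2^2 ≤ 1} :=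
    measurableSet_le (by fun_prop) (by fun_prop)
  have m2 : MeasurableSet {p : ℝ × ℝ | (p.1 - 1)^2 + p.2^2 ≤ 1} :=
    measurableSet_le (by fun_prop) (by fun_prop)
  have m3 : MeasurableSet {p : ℝ × ℝ | 0 ≤ p.2} :=
    measurableSet_le (by fun_prop) (by fun_prop)
  have m4 : MeasurableSet {p : ℝ × ℝ | (p.1 - 1/2)^2 + p.2^2 ≤ 1/4} :=
    measurableSet_le (by fun_prop) (by fun_prop)
  have : T = ({p : ℝ × ℝ | p.1^2 + p.2^2 ≤ 1} ∩ ({p : ℝ × ℝ | (p.1 - 1)^2 + p.2^2 ≤ 1} ∩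
      {p : ℝ × ℝ | 0 ≤ p.2})) \ {p : ℝ × ℝ | (p.1 - 1/2)^2 + p.2^2 ≤ 1/4} := rfl
  rw [this]
  exact ((m1.inter (m2.inter m3)).diff m4)

lemma slice_mem (x : ℝ) (hx : x ∈ Set.Icc (0:ℝ) 1) :
    Prod.mk x ⁻¹' T = Set.Ioc (g x) (f x) := by
  obtain ⟨hx0, hx1⟩ := hx
  have h1 : (0:ℝ) ≤ 1 - x^2 := by nlinarith
  have h2 : (0:ℝ) ≤ 1 - (x-1)^2 := by nlinarith
  have h3 : (0:ℝ) ≤ 1/4 - (x - 1/2)^2 := by nlinarith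
  ext y
  simp only [T, Set.mem_preimage, Set.mem_setOf_eq, Set.mem_Ioc, f, g]
  constructor
  · rintro ⟨⟨hb1, hb2, hy⟩, hb3⟩
    push_neg at hb3
    refine ⟨?_, le_min ?_ ?_⟩
    · rcases eq_or_lt_of_le hy with h | h
      · exact absurd (by nlinarith) (not_lt.2 hb3.le).elim
      · rw [Real.sqrt_lt' h]; nlinarith
    · rw [Real.le_sqrt hy h1]; nlinarith
    · rw [Real.le_sqrt hy h2]; nlinarith
  · rintro ⟨hgy, hfy⟩
    have hy : 0 < y := lt_of_le_of_lt (Real.sqrt_nonneg _) hgy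
    have hf1 : y ≤ Real.sqrt (1 - x^2) := le_trans hfy (min_le_left _ _)
    have hf2 : y ≤ Real.sqrt (1 - (x-1)^2) := le_trans hfy (min_le_right _ _)
    rw [Real.le_sqrt hy.le h1] at hf1
    rw [Real.le_sqrt hy.le h2] at hf2
    rw [Real.sqrt_lt' hy] at hgy
    refine ⟨⟨by nlinarith, by nlinarith, hy.le⟩, by push_neg; nlinarith⟩

lemma slice_empty (x : ℝ) (hx : x ∉ Set.Icc (0:ℝ) 1) :
    Prod.mk x ⁻¹' T = ∅ := by
  rw [Set.mem_Icc, not_and_or, not_le, not_le] at hx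
  ext y
  simp only [T, Set.mem_preimage, Set.mem_setOf_eq, Set.mem_empty_iff_false, iff_false]
  rintro ⟨⟨hb1, hb2, hy⟩, -⟩
  have hy2 : 0 ≤ y^2 := sq_nonneg y
  rcases hx with h | h
  · nlinarith
  · nlinarith

lemma g_le_f {x : ℝ} (hx : x ∈ Set.Icc (0:ℝ) 1) : g x ≤ f x := by
  obtain ⟨hx0, hx1⟩ := hx
  refine le_min ?_ ?_ <;> exact Real.sqrt_le_sqrt (by nlinarith)

lemma continuous_f : Continuous f := by
  apply Continuous.min <;> exact (continuous_const.sub (by fun_prop)).sqrt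

lemma continuous_g : Continuous g := (continuous_const.sub (by fun_prop)).sqrt

lemma intA : ∫ x in (1/2 : ℝ)..1, Real.sqrt (1 - x^2) = π/6 - Real.sqrt 3 / 8 := by
  have key : ∫ x in (1/2 : ℝ)..1, Real.sqrt (1 - x^2) =
      ∫ x in (π/6)..(π/2), Real.cos x ^ 2 := by
    calc ∫ x in (1/2 : ℝ)..1, Real.sqrt (1 - x^2)
        = ∫ x in Real.sin (π/6)..Real.sin (π/2), Real.sqrt (1 - x^2) := by
          rw [Real.sin_pi_div_six, Real.sin_pi_div_two]
      _ = ∫ x in (π/6)..(π/2), Real.sqrt (1 - Real.sin x ^ 2) * Real.cos x := by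
          exact (intervalIntegral.integral_comp_mul_deriv
            (fun x _ => Real.hasDerivAt_sin x) Real.continuousOn_cos (by fun_prop)).symm
      _ = ∫ x in (π/6)..(π/2), Real.cos x ^ 2 := by
          refine intervalIntegral.integral_congr fun z hz => ?_
          rw [Set.uIcc_of_le (by linarith [Real.pi_pos] : π/6 ≤ π/2), Set.mem_Icc] at hz
          have hpi := Real.pi_pos
          rw [← Real.cos_eq_sqrt_one_sub_sin_sq (by linarith [hz.1]) hz.2, pow_two]
  rw [key, integral_cos_sq]
  rw [Real.cos_pi_div_two, Real.sin_pi_div_two, Real.cos_pi_div_six, Real.sin_pi_div_six]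
  ring

lemma intA' : ∫ x in (0 : ℝ)..(1/2), Real.sqrt (1 - (x-1)^2) = π/6 - Real.sqrt 3 / 8 := by
  have h1 : ∫ x in (0 : ℝ)..(1/2), Real.sqrt (1 - (x-1)^2) =
      ∫ x in (0 - 1 : ℝ)..(1/2 - 1), Real.sqrt (1 - x^2) :=
    intervalIntegral.integral_comp_sub_right
      (a := (0:ℝ)) (b := 1/2) (fun x => Real.sqrt (1 - x^2)) 1
  have h2 := intervalIntegral.integral_comp_neg (a := (1/2:ℝ)) (b := 1)
      (fun x => Real.sqrt (1 - x^2))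
  simp only [neg_sq] at h2
  rw [h1, show (0 - 1 : ℝ) = -1 by norm_num, show (1/2 - 1 : ℝ) = -(1/2) by norm_num,
    ← h2, intA]

lemma intB : ∫ x in (0 : ℝ)..1, g x = π/8 := by
  have h1 : ∫ x in (0 : ℝ)..1, g x = ∫ x in (-1/2 : ℝ)..(1/2), Real.sqrt (1/4 - x^2) := by
    have := intervalIntegral.integral_comp_sub_right
      (a := (0:ℝ)) (b := 1) (fun x => Real.sqrt (1/4 - x^2)) (1/2)
    simp only [g]
    rw [this]
    norm_num
  have h2 : ∫ x in (-1 : ℝ)..1, Real.sqrt (1/4 - (x/2)^2) =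
      (2:ℝ) • ∫ x in (-1/2 : ℝ)..(1/2), Real.sqrt (1/4 - x^2) := by
    have := intervalIntegral.integral_comp_div (a := (-1:ℝ)) (b := 1)
      (f := fun x => Real.sqrt (1/4 - x^2)) (c := (2:ℝ)) (by norm_num)
    rw [this]
  have h3 : (fun x : ℝ => Real.sqrt (1/4 - (x/2)^2)) =
      fun x : ℝ => Real.sqrt (1 - x^2) * (1/2) := by
    funext x
    rw [show (1/4 - (x/2)^2 : ℝ) = (1 - x^2) * (1/4) by ring,
      Real.sqrt_mul' _ (by norm_num : (0:ℝ) ≤ 1/4),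
      show Real.sqrt (1/4 : ℝ) = 1/2 from by
        rw [show (1/4 : ℝ) = (1/2)^2 by norm_num, Real.sqrt_sq (by norm_num : (0:ℝ) ≤ 1/2)]]
  rw [h1]
  have h4 : ∫ x in (-1 : ℝ)..1, Real.sqrt (1/4 - (x/2)^2) = π/4 := by
    rw [h3]
    rw [intervalIntegral.integral_mul_const, integral_sqrt_one_sub_sq]
    ring
  have := h2.symm.trans h4
  rw [smul_eq_mul] at this
  linarith

lemma int_fg : ∫ x in (0 : ℝ)..1, (f x - g x) = π/3 - Real.sqrt 3 / 4 - π/8 := by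
  have hf : ∀ a b : ℝ, IntervalIntegrable f volume a b :=
    fun a b => continuous_f.intervalIntegrable a b
  have hg : ∀ a b : ℝ, IntervalIntegrable g volume a b :=
    fun a b => continuous_g.intervalIntegrable a b
  rw [intervalIntegral.integral_sub (hf 0 1) (hg 0 1)]
  have hsplit : ∫ x in (0 : ℝ)..1, f x =
      (∫ x in (0 : ℝ)..(1/2), f x) + ∫ x in (1/2 : ℝ)..1, f x :=
    (intervalIntegral.integral_add_adjacent_intervals (hf 0 (1/2)) (hf (1/2) 1)).symm
  have e1 : ∫ x in (0 : ℝ)..(1/2), f x = ∫ x in (0 : ℝ)..(1/2), Real.sqrt (1 - (x-1)^2) := by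
    refine intervalIntegral.integral_congr fun z hz => ?_
    rw [Set.uIcc_of_le (by norm_num : (0:ℝ) ≤ 1/2), Set.mem_Icc] at hz
    exact min_eq_right (Real.sqrt_le_sqrt (by nlinarith [hz.1, hz.2]))
  have e2 : ∫ x in (1/2 : ℝ)..1, f x = ∫ x in (1/2 : ℝ)..1, Real.sqrt (1 - x^2) := by
    refine intervalIntegral.integral_congr fun z hz => ?_
    rw [Set.uIcc_of_le (by norm_num : (1/2:ℝ) ≤ 1), Set.mem_Icc] at hz
    exact min_eq_left (Real.sqrt_le_sqrt (by nlinarith [hz.1, hz.2]))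
  rw [hsplit, e1, e2, intA, intA', intB]
  ring

lemma volume_T : volume T = ENNReal.ofReal ((5 * π - 6 * Real.sqrt 3) / 24) := by
  rw [show (volume : Measure (ℝ × ℝ)) = (volume : Measure ℝ).prod volume from rfl,
    Measure.prod_apply measurableSet_T]
  have hslice : ∀ x : ℝ, volume (Prod.mk x ⁻¹' T) =
      Set.indicator (Set.Icc (0:ℝ) 1) (fun x => ENNReal.ofReal (f x - g x)) x := by
    intro x
    by_cases hx : x ∈ Set.Icc (0:ℝ) 1
    · rw [slice_mem x hx, Set.indicator_of_mem hx, Real.volume_Ioc]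
    · rw [slice_empty x hx, Set.indicator_of_notMem hx, measure_empty]
  simp only [hslice]
  rw [lintegral_indicator measurableSet_Icc]
  rw [← ofReal_integral_eq_lintegral_ofReal]
  · rw [MeasureTheory.integral_Icc_eq_integral_Ioc,
      ← intervalIntegral.integral_of_le (by norm_num : (0:ℝ) ≤ 1), int_fg]
    congr 1
    ring
  · exact (continuous_f.sub continuous_g).integrableOn_Icc
  · filter_upwards [ae_restrict_mem measurableSet_Icc] with x hx
    exact sub_nonneg.2 (g_le_f hx)

end MixedAux

theorem mixed_triangle_exterior_area :
    volume ({x : EuclideanSpace ℝ (Fin 2) |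
        ‖x - pt 0 0‖ ≤ 1 ∧ ‖x - pt 1 0‖ ≤ 1 ∧ 0 ≤ x 1} \
        Metric.closedBall (pt (1/2) 0) (1/2)) =
      ENNReal.ofReal ((5 * π - 6 * Real.sqrt 3) / 24) := by
  classical
  set φ : EuclideanSpace ℝ (Fin 2) ≃ᵐ ℝ × ℝ :=
    (MeasurableEquiv.toLp 2 (Fin 2 → ℝ)).symm.trans MeasurableEquiv.finTwoArrow with hφ
  have hmp : MeasurePreserving φ volume volume :=
    (volume_preserving_finTwoArrow ℝ).comp
      (EuclideanSpace.volume_preserving_symm_measurableEquiv_toLp (Fin 2))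
  have hnorm : ∀ (x : EuclideanSpace ℝ (Fin 2)) (a b r : ℝ), 0 ≤ r →
      (‖x - pt a b‖ ≤ r ↔ (x 0 - a)^2 + (x 1 - b)^2 ≤ r^2) := by
    intro x a b r hr
    rw [EuclideanSpace.norm_eq, Fin.sum_univ_two]
    have h0 : (x - pt a b) 0 = x 0 - a := rfl
    have h1 : (x - pt a b) 1 = x 1 - b := rfl
    rw [h0, h1, Real.norm_eq_abs, Real.norm_eq_abs, sq_abs, sq_abs]
    exact Real.sqrt_le_left hr
  have hset : ({x : EuclideanSpace ℝ (Fin 2) |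
      ‖x - pt 0 0‖ ≤ 1 ∧ ‖x - pt 1 0‖ ≤ 1 ∧ 0 ≤ x 1} \
      Metric.closedBall (pt (1/2) 0) (1/2)) = φ ⁻¹' MixedAux.T := by
    ext x
    have e0 : (φ x).1 = x 0 := rfl
    have e1 : (φ x).2 = x 1 := rfl
    simp only [Set.mem_diff, Set.mem_setOf_eq, Metric.mem_closedBall, Set.mem_preimage,
      MixedAux.T, e0, e1, dist_eq_norm]
    rw [hnorm x 0 0 1 (by norm_num), hnorm x 1 0 1 (by norm_num),
      hnorm x (1/2) 0 (1/2) (by norm_num)]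
    norm_num
  rw [hset, hmp.measure_preimage MixedAux.measurableSet_T.nullMeasurableSet]
  exact MixedAux.volume_T
end

section
/- Let S₀ = {x ∈ ℝ² : ‖x − K‖ ≤ 1, ‖x − L‖ ≤ 1, x₂ ≥ 0}, where K = (0,0) and L = (1,0), and let D = closedBall((1/2, 0), 1/2). Then the ratio of the Lebesgue measure of S₀ \ D to the Lebesgue measure of S₀ equals (5π − 6√3)/(8π − 6√3). -/
open MeasureTheory Real Set

noncomputable def fU (x : ℝ) : ℝ := min (Real.sqrt (1 - x^2)) (Real.sqrt (1 - (x-1)^2))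
noncomputable def gD (x : ℝ) : ℝ := Real.sqrt (1/4 - (x-1/2)^2)
noncomputable def Hmap : EuclideanSpace ℝ (Fin 2) → ℝ × ℝ := fun x => (x 0, x 1)

lemma Hmp : MeasurePreserving Hmap volume volume :=
  (MeasureTheory.volume_preserving_piFinTwo (fun _ => ℝ)).comp
    (EuclideanSpace.volume_preserving_symm_measurableEquiv_toLp (Fin 2))

lemma fU_cont : Continuous fU := by
  apply Continuous.min <;> exact Real.continuous_sqrt.comp (by continuity)
lemma gD_cont : Continuous gD := Real.continuous_sqrt.comp (by continuity)

lemma sin_sub {θ₁ θ₂ : ℝ} (h : uIcc θ₁ θ₂ ⊆ Icc (-(π/2)) (π/2)) :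
    ∫ x in Real.sin θ₁..Real.sin θ₂, Real.sqrt (1 - x^2) = ∫ θ in θ₁..θ₂, Real.cos θ ^ 2 := by
  have key := intervalIntegral.integral_comp_smul_deriv (a := θ₁) (b := θ₂)
    (f := Real.sin) (f' := Real.cos) (g := fun x => Real.sqrt (1 - x^2))
    (fun x _ => Real.hasDerivAt_sin x) Real.continuous_cos.continuousOn
    (Real.continuous_sqrt.comp (by continuity))
  rw [← key]
  apply intervalIntegral.integral_congr
  intro θ hθ
  have hc : 0 ≤ Real.cos θ := Real.cos_nonneg_of_mem_Icc (by simpa using h hθ)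
  have h1 : 1 - Real.sin θ ^ 2 = Real.cos θ ^ 2 := by
    have := Real.sin_sq_add_cos_sq θ; linarith
  simp only [Function.comp, smul_eq_mul, h1, Real.sqrt_sq hc]
  ring

lemma I1 : ∫ x in (1/2:ℝ)..1, Real.sqrt (1 - x^2) = π/6 - Real.sqrt 3/8 := by
  have hle : π/6 ≤ π/2 := by linarith [Real.pi_pos]
  have h := sin_sub (θ₁ := π/6) (θ₂ := π/2) (by
    rw [uIcc_of_le hle]
    intro x hx
    exact ⟨by linarith [hx.1, Real.pi_pos], hx.2⟩)
  rw [Real.sin_pi_div_six, Real.sin_pi_div_two] at h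
  rw [h, integral_cos_sq, Real.cos_pi_div_two, Real.sin_pi_div_two, Real.cos_pi_div_six,
    Real.sin_pi_div_six]
  ring

lemma I3 : ∫ x in (0:ℝ)..(1/2:ℝ), Real.sqrt (1 - (x-1)^2) = π/6 - Real.sqrt 3/8 := by
  have : ∫ x in (0:ℝ)..(1/2:ℝ), Real.sqrt (1 - (x-1)^2)
      = ∫ x in (0:ℝ)..(1/2:ℝ), (fun y => Real.sqrt (1 - y^2)) (1 - x) := by
    apply intervalIntegral.integral_congr
    intro x _
    simp only
    congr 1
    ring
  rw [this, intervalIntegral.integral_comp_sub_left (fun y => Real.sqrt (1 - y^2)) 1]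
  norm_num [I1]

lemma I2 : ∫ x in (0:ℝ)..1, gD x = π/8 := by
  have key := intervalIntegral.integral_comp_smul_deriv (a := -(π/2)) (b := π/2)
    (f := fun θ => (Real.sin θ + 1)/2) (f' := fun θ => Real.cos θ / 2) (g := gD)
    (fun x _ => ((Real.hasDerivAt_sin x).add_const 1).div_const 2)
    (Real.continuous_cos.div_const 2).continuousOn
    (Real.continuous_sqrt.comp (by continuity))
  simp only [Real.sin_pi_div_two, Real.sin_neg] at key
  norm_num at key
  have hL : ∫ θ in -(π/2)..(π/2), (Real.cos θ / 2) • gD ((Real.sin θ + 1)/2)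
      = ∫ θ in -(π/2)..(π/2), Real.cos θ ^ 2 / 4 := by
    apply intervalIntegral.integral_congr
    intro θ hθ
    have hθ' : θ ∈ Icc (-(π/2)) (π/2) := by
      rwa [uIcc_of_le (by linarith [Real.pi_pos])] at hθ
    have hc : 0 ≤ Real.cos θ := Real.cos_nonneg_of_mem_Icc (by simpa using hθ')
    have h1 : (1:ℝ)/4 - ((Real.sin θ + 1)/2 - 1/2)^2 = (Real.cos θ / 2)^2 := by
      have := Real.sin_sq_add_cos_sq θ; ring_nf; nlinarith [this]
    simp only [gD, smul_eq_mul, h1, Real.sqrt_sq (by positivity : (0:ℝ) ≤ Real.cos θ / 2)]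
    ring
  simp only [smul_eq_mul] at hL
  rw [hL] at key
  rw [← key, intervalIntegral.integral_div, integral_cos_sq]
  simp [Real.cos_pi_div_two]
  ring

lemma lens_val : ∫ x in (0:ℝ)..1, fU x = π/3 - Real.sqrt 3/4 := by
  have h1 : ∫ x in (0:ℝ)..(1/2:ℝ), fU x = π/6 - Real.sqrt 3/8 := by
    rw [← I3]
    apply intervalIntegral.integral_congr
    intro x hx
    rw [uIcc_of_le (by norm_num)] at hx
    exact min_eq_right (Real.sqrt_le_sqrt (by nlinarith [hx.1, hx.2]))
  have h2 : ∫ x in (1/2:ℝ)..1, fU x = π/6 - Real.sqrt 3/8 := by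
    rw [← I1]
    apply intervalIntegral.integral_congr
    intro x hx
    rw [uIcc_of_le (by norm_num)] at hx
    exact min_eq_left (Real.sqrt_le_sqrt (by nlinarith [hx.1, hx.2]))
  have := intervalIntegral.integral_add_adjacent_intervals
    (fU_cont.intervalIntegrable (μ := volume) (0:ℝ) (1/2))
    (fU_cont.intervalIntegrable (μ := volume) (1/2:ℝ) 1)
  rw [← this, h1, h2]
  ring

lemma pt0 (a b : ℝ) : pt a b 0 = a := by simp [pt]
lemma pt1 (a b : ℝ) : pt a b 1 = b := by simp [pt]

lemma norm_sub_pt (x : EuclideanSpace ℝ (Fin 2)) (a b : ℝ) :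
    ‖x - pt a b‖ = Real.sqrt ((x 0 - a)^2 + (x 1 - b)^2) := by
  rw [EuclideanSpace.norm_eq]
  congr 1
  simp [Fin.sum_univ_two, pt0, pt1, sq_abs]

lemma lens_preimage :
    {x : EuclideanSpace ℝ (Fin 2) | ‖x - pt 0 0‖ < 1 ∧ ‖x - pt 1 0‖ < 1 ∧ 0 < x 1}
      = Hmap ⁻¹' (regionBetween (fun _ => (0:ℝ)) fU (Ioo 0 1)) := by
  ext x
  simp only [mem_setOf_eq, mem_preimage, regionBetween, mem_Ioo, Hmap, mem_setOf_eq]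
  rw [norm_sub_pt, norm_sub_pt]
  constructor
  · rintro ⟨h1, h2, h3⟩
    have h1' := (Real.sqrt_lt' one_pos).mp h1
    have h2' := (Real.sqrt_lt' one_pos).mp h2
    refine ⟨⟨by nlinarith, by nlinarith⟩, h3, lt_min ?_ ?_⟩
    · exact (Real.lt_sqrt h3.le).mpr (by nlinarith)
    · exact (Real.lt_sqrt h3.le).mpr (by nlinarith)
  · rintro ⟨⟨ha0, ha1⟩, hb0, hb1⟩
    have hm1 := lt_of_lt_of_le hb1 (min_le_left _ _)
    have hm2 := lt_of_lt_of_le hb1 (min_le_right _ _)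
    have e1 := (Real.lt_sqrt hb0.le).mp hm1
    have e2 := (Real.lt_sqrt hb0.le).mp hm2
    refine ⟨(Real.sqrt_lt' one_pos).mpr (by nlinarith),
      (Real.sqrt_lt' one_pos).mpr (by nlinarith), hb0⟩

lemma disk_preimage :
    {x : EuclideanSpace ℝ (Fin 2) | ‖x - pt (1/2) 0‖ < 1/2 ∧ 0 < x 1}
      = Hmap ⁻¹' (regionBetween (fun _ => (0:ℝ)) gD (Ioo 0 1)) := by
  ext x
  simp only [mem_setOf_eq, mem_preimage, regionBetween, mem_Ioo, Hmap, mem_setOf_eq, gD]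
  rw [norm_sub_pt]
  constructor
  · rintro ⟨h1, h3⟩
    have h1' := (Real.sqrt_lt' (by norm_num : (0:ℝ) < 1/2)).mp h1
    refine ⟨⟨by nlinarith, by nlinarith⟩, h3, (Real.lt_sqrt h3.le).mpr (by nlinarith)⟩
  · rintro ⟨⟨ha0, ha1⟩, hb0, hb1⟩
    have e1 := (Real.lt_sqrt hb0.le).mp hb1
    exact ⟨(Real.sqrt_lt' (by norm_num : (0:ℝ) < 1/2)).mpr (by nlinarith), hb0⟩

lemma vol_region (f : ℝ → ℝ) (hf : Continuous f) (hpos : ∀ x ∈ Ioo (0:ℝ) 1, 0 ≤ f x) :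
    volume (regionBetween (fun _ => (0:ℝ)) f (Ioo 0 1))
      = ENNReal.ofReal (∫ x in (0:ℝ)..1, f x) := by
  have h := volume_regionBetween_eq_integral (μ := volume) (f := fun _ => (0:ℝ)) (g := f)
    (s := Ioo 0 1) (integrableOn_zero) ((hf.integrableOn_Icc).mono_set Ioo_subset_Icc_self)
    measurableSet_Ioo hpos
  rw [show ((volume : Measure ℝ).prod volume) = (volume : Measure (ℝ×ℝ)) from rfl] at h
  rw [h]
  congr 1
  rw [intervalIntegral.integral_of_le (by norm_num), MeasureTheory.integral_Ioc_eq_integral_Ioo]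
  simp

lemma hyperplane_null : volume {x : EuclideanSpace ℝ (Fin 2) | x 1 = 0} = 0 := by
  have : {x : EuclideanSpace ℝ (Fin 2) | x 1 = 0} = Hmap ⁻¹' (univ ×ˢ {0}) := by
    ext x; simp [Hmap, eq_comm]
  rw [this, Hmp.measure_preimage
    ((MeasurableSet.univ.prod (measurableSet_singleton 0)).nullMeasurableSet)]
  rw [show (volume : Measure (ℝ×ℝ)) = (volume : Measure ℝ).prod volume from rfl,
    Measure.prod_prod]
  simp

lemma null_squeeze {A A' N : Set (EuclideanSpace ℝ (Fin 2))} (h1 : A' ⊆ A)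
    (h2 : A ⊆ A' ∪ N) (hN : volume N = 0) : volume A = volume A' := by
  refine le_antisymm ((measure_mono h2).trans ?_) (measure_mono h1)
  exact (measure_union_le _ _).trans (by rw [hN, add_zero])

lemma vol_A : volume {x : EuclideanSpace ℝ (Fin 2) | ‖x - pt 0 0‖ ≤ 1 ∧ ‖x - pt 1 0‖ ≤ 1 ∧ 0 ≤ x 1}
    = ENNReal.ofReal (π/3 - Real.sqrt 3/4) := by
  have hstrict : volume {x : EuclideanSpace ℝ (Fin 2) |
        ‖x - pt 0 0‖ < 1 ∧ ‖x - pt 1 0‖ < 1 ∧ 0 < x 1}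
      = ENNReal.ofReal (π/3 - Real.sqrt 3/4) := by
    rw [lens_preimage, Hmp.measure_preimage (measurableSet_regionBetween measurable_const
        fU_cont.measurable measurableSet_Ioo).nullMeasurableSet,
      vol_region fU fU_cont (fun x _ => le_min (Real.sqrt_nonneg _) (Real.sqrt_nonneg _)),
      lens_val]
  rw [← hstrict]
  apply null_squeeze (N := (Metric.sphere (pt 0 0) 1 ∪ Metric.sphere (pt 1 0) 1) ∪ {x | x 1 = 0})
  · rintro x ⟨h1, h2, h3⟩; exact ⟨h1.le, h2.le, h3.le⟩
  · rintro x ⟨h1, h2, h3⟩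
    rcases lt_or_eq_of_le h1 with h1 | h1
    · rcases lt_or_eq_of_le h2 with h2 | h2
      · rcases lt_or_eq_of_le h3 with h3 | h3
        · exact Or.inl ⟨h1, h2, h3⟩
        · exact Or.inr (Or.inr h3.symm)
      · exact Or.inr (Or.inl (Or.inr (by simp [Metric.mem_sphere, dist_eq_norm, h2])))
    · exact Or.inr (Or.inl (Or.inl (by simp [Metric.mem_sphere, dist_eq_norm, h1])))
  · exact measure_union_null
      (measure_union_null (Measure.addHaar_sphere volume _ _) (Measure.addHaar_sphere volume _ _))
      hyperplane_null

lemma norm_pt_pt : ‖pt (1/2) 0 - pt 0 0‖ = 1/2 ∧ ‖pt (1/2) 0 - pt 1 0‖ = 1/2 := by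
  constructor
  · rw [norm_sub_pt, pt0, pt1,
      show ((1:ℝ)/2 - 0)^2 + ((0:ℝ) - 0)^2 = ((1:ℝ)/2)^2 by ring, Real.sqrt_sq (by norm_num)]
  · rw [norm_sub_pt, pt0, pt1,
      show ((1:ℝ)/2 - 1)^2 + ((0:ℝ) - 0)^2 = ((1:ℝ)/2)^2 by ring, Real.sqrt_sq (by norm_num)]

lemma vol_AB : volume ({x : EuclideanSpace ℝ (Fin 2) |
      ‖x - pt 0 0‖ ≤ 1 ∧ ‖x - pt 1 0‖ ≤ 1 ∧ 0 ≤ x 1} ∩ Metric.closedBall (pt (1/2) 0) (1/2))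
    = ENNReal.ofReal (π/8) := by
  have hstrict : volume {x : EuclideanSpace ℝ (Fin 2) | ‖x - pt (1/2) 0‖ < 1/2 ∧ 0 < x 1}
      = ENNReal.ofReal (π/8) := by
    rw [disk_preimage, Hmp.measure_preimage (measurableSet_regionBetween measurable_const
        gD_cont.measurable measurableSet_Ioo).nullMeasurableSet,
      vol_region gD gD_cont (fun x _ => Real.sqrt_nonneg _), I2]
  rw [← hstrict]
  apply null_squeeze (N := Metric.sphere (pt (1/2) 0) (1/2) ∪ {x | x 1 = 0})
  · rintro x ⟨h1, h2⟩
    have e1 : x - pt 0 0 = (x - pt (1/2) 0) + (pt (1/2) 0 - pt 0 0) :=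
      (sub_add_sub_cancel x (pt (1/2) 0) (pt 0 0)).symm
    have e2 : x - pt 1 0 = (x - pt (1/2) 0) + (pt (1/2) 0 - pt 1 0) :=
      (sub_add_sub_cancel x (pt (1/2) 0) (pt 1 0)).symm
    refine ⟨⟨?_, ?_, h2.le⟩, ?_⟩
    · calc ‖x - pt 0 0‖ ≤ ‖x - pt (1/2) 0‖ + ‖pt (1/2) 0 - pt 0 0‖ := by
            rw [e1]; exact norm_add_le _ _
        _ ≤ 1 := by rw [norm_pt_pt.1]; linarith
    · calc ‖x - pt 1 0‖ ≤ ‖x - pt (1/2) 0‖ + ‖pt (1/2) 0 - pt 1 0‖ := by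
            rw [e2]; exact norm_add_le _ _
        _ ≤ 1 := by rw [norm_pt_pt.2]; linarith
    · rw [Metric.mem_closedBall, dist_eq_norm]; exact h1.le
  · rintro x ⟨⟨_, _, h3⟩, hB⟩
    have hB' : ‖x - pt (1/2) 0‖ ≤ 1/2 := by
      rw [← dist_eq_norm]; exact Metric.mem_closedBall.mp hB
    rcases lt_or_eq_of_le hB' with hB' | hB'
    · rcases lt_or_eq_of_le h3 with h3 | h3
      · exact Or.inl ⟨hB', h3⟩
      · exact Or.inr (Or.inr h3.symm)
    · exact Or.inr (Or.inl (by rw [Metric.mem_sphere, dist_eq_norm]; exact hB'))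
  · exact measure_union_null (Measure.addHaar_sphere volume _ _) hyperplane_null

theorem mixed_triangle_exterior_ratio :
    volume ({x : EuclideanSpace ℝ (Fin 2) |
        ‖x - pt 0 0‖ ≤ 1 ∧ ‖x - pt 1 0‖ ≤ 1 ∧ 0 ≤ x 1} \
        Metric.closedBall (pt (1/2) 0) (1/2)) /
      volume {x : EuclideanSpace ℝ (Fin 2) |
        ‖x - pt 0 0‖ ≤ 1 ∧ ‖x - pt 1 0‖ ≤ 1 ∧ 0 ≤ x 1} =
      ENNReal.ofReal ((5 * π - 6 * Real.sqrt 3) / (8 * π - 6 * Real.sqrt 3)) := by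
  have hs3 : Real.sqrt 3 < 1.74 := (Real.sqrt_lt' (by norm_num)).mpr (by norm_num)
  have hs3' : (0:ℝ) ≤ Real.sqrt 3 := Real.sqrt_nonneg _
  have hpi := Real.pi_gt_d6
  have hL : (0:ℝ) < π/3 - Real.sqrt 3/4 := by nlinarith
  have hAmeas : MeasurableSet {x : EuclideanSpace ℝ (Fin 2) |
      ‖x - pt 0 0‖ ≤ 1 ∧ ‖x - pt 1 0‖ ≤ 1 ∧ 0 ≤ x 1} := by
    refine IsClosed.measurableSet ?_
    have c1 : Continuous fun x : EuclideanSpace ℝ (Fin 2) => x 1 :=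
      (EuclideanSpace.proj (1 : Fin 2)).continuous
    exact ((isClosed_le ((continuous_id.sub continuous_const).norm) continuous_const).inter
      ((isClosed_le ((continuous_id.sub continuous_const).norm) continuous_const).inter
        (isClosed_le continuous_const c1)))
  have hdiff : volume ({x : EuclideanSpace ℝ (Fin 2) |
        ‖x - pt 0 0‖ ≤ 1 ∧ ‖x - pt 1 0‖ ≤ 1 ∧ 0 ≤ x 1} \
        Metric.closedBall (pt (1/2) 0) (1/2))
      = ENNReal.ofReal (π/3 - Real.sqrt 3/4) - ENNReal.ofReal (π/8) := by
    rw [← Set.diff_self_inter, measure_diff Set.inter_subset_left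
      ((hAmeas.inter measurableSet_closedBall).nullMeasurableSet)
      (by rw [vol_AB]; exact ENNReal.ofReal_ne_top), vol_A, vol_AB]
  rw [hdiff, vol_A, ← ENNReal.ofReal_sub _ (by positivity), ← ENNReal.ofReal_div_of_pos hL]
  congr 1
  rw [div_eq_div_iff hL.ne' (by nlinarith : (0:ℝ) < 8*π - 6*Real.sqrt 3).ne']
  ring
end

section
/- Let 0 < θ < π/3, and let T be the convex hull of the three points K = (0,0), L = (1,0) and M = (cos θ, sin θ) in the Euclidean plane. Then T has diameter exactly 1, and the Lebesgue measure of T \ closedBall((1/2, 0), 1/2) is strictly positive; i.e., a set of positive area of the triangle lies outside the circle having its longest side KL as diameter. -/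
open MeasureTheory Real

lemma dist_pt (a b c d : ℝ) :
    dist (pt a b) (pt c d) = Real.sqrt ((a - c)^2 + (b - d)^2) := by
  rw [EuclideanSpace.dist_eq]
  simp [pt, Fin.sum_univ_two, Real.dist_eq, sq_abs]

theorem isosceles_triangle_counterexample
    (θ : ℝ) (hθ0 : 0 < θ) (hθ1 : θ < π / 3) :
    Metric.diam
        (convexHull ℝ {pt 0 0, pt 1 0, pt (Real.cos θ) (Real.sin θ)}) = 1 ∧
    0 < volume
        ((convexHull ℝ {pt 0 0, pt 1 0, pt (Real.cos θ) (Real.sin θ)}) \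
          Metric.closedBall (pt (1/2) 0) (1/2)) := by
  have hπ3 : π / 3 ≤ π := by nlinarith [Real.pi_pos]
  have hπ : θ < π := lt_of_lt_of_le hθ1 hπ3
  have hc1 : 1/2 < Real.cos θ := by
    have := Real.cos_lt_cos_of_nonneg_of_le_pi hθ0.le hπ3 hθ1
    rwa [Real.cos_pi_div_three] at this
  have hc2 : Real.cos θ < 1 := by
    have := Real.cos_lt_cos_of_nonneg_of_le_pi le_rfl hπ.le hθ0
    rwa [Real.cos_zero] at this
  have hs : 0 < Real.sin θ := Real.sin_pos_of_pos_of_lt_pi hθ0 hπ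
  have hsc := Real.sin_sq_add_cos_sq θ
  set K := pt 0 0
  set L := pt 1 0
  set M := pt (Real.cos θ) (Real.sin θ)
  set c := pt (1/2) 0
  set T := convexHull ℝ ({K, L, M} : Set (EuclideanSpace ℝ (Fin 2))) with hT
  -- distances
  have dKL : dist K L = 1 := by rw [dist_pt]; norm_num
  have dKM : dist K M = 1 := by
    rw [dist_pt]
    rw [show (0 - Real.cos θ)^2 + (0 - Real.sin θ)^2 = 1 by nlinarith]
    exact Real.sqrt_one
  have dLM : dist L M < 1 := by
    have h := Real.sqrt_lt_sqrt (x := (1 - Real.cos θ)^2 + (0 - Real.sin θ)^2)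
      (by positivity) (y := 1) (by nlinarith)
    rw [dist_pt]
    simpa using h
  constructor
  · rw [hT, convexHull_diam, Metric.diam_triple, dKL, dKM]
    simp [dLM.le]
  · -- not collinear
    have hcol : ¬ Collinear ℝ ({K, L, M} : Set (EuclideanSpace ℝ (Fin 2))) := by
      intro h
      rw [collinear_iff_of_mem (Set.mem_insert K _)] at h
      obtain ⟨v, hv⟩ := h
      obtain ⟨r, hr⟩ := hv L (by simp)
      obtain ⟨u, hu⟩ := hv M (by simp)
      have hr0 : L 0 = r * v 0 + K 0 := by rw [hr]; rfl
      have hr1 : L 1 = r * v 1 + K 1 := by rw [hr]; rfl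
      have hu1 : M 1 = u * v 1 + K 1 := by rw [hu]; rfl
      have hK0 : K 0 = 0 := rfl
      have hK1 : K 1 = 0 := rfl
      have hL0 : L 0 = 1 := rfl
      have hL1 : L 1 = 0 := rfl
      have hM1 : M 1 = Real.sin θ := rfl
      rw [hL0, hK0] at hr0
      rw [hL1, hK1] at hr1
      rw [hM1, hK1] at hu1
      have hrne : r ≠ 0 := by intro h0; rw [h0] at hr0; simp at hr0
      have hv1 : v 1 = 0 := by
        rcases mul_eq_zero.mp (by linarith : r * v 1 = 0) with h | h
        · exact absurd h hrne
        · exact h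
      rw [hv1] at hu1; simp at hu1; linarith
    have hai : AffineIndependent ℝ ![K, L, M] :=
      affineIndependent_iff_not_collinear_set.mpr hcol
    have hrange : Set.range ![K, L, M] = {K, L, M} := by
      ext x
      simp [Fin.exists_fin_succ, Fin.exists_fin_two]
      tauto
    have hspan : affineSpan ℝ ({K, L, M} : Set (EuclideanSpace ℝ (Fin 2))) = ⊤ := by
      rw [← hrange]
      rw [hai.affineSpan_eq_top_iff_card_eq_finrank_add_one]
      simp [finrank_euclideanSpace_fin]
    have hconv : Convex ℝ T := convex_convexHull ℝ _
    have hint : (interior T).Nonempty := by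
      rw [hconv.interior_nonempty_iff_affineSpan_eq_top, hT, affineSpan_convexHull]
      exact hspan
    obtain ⟨z, hz⟩ := hint
    have hMT : M ∈ T := subset_convexHull ℝ _ (by simp)
    have dMc : 1/2 < dist M c := by
      rw [show dist M c = Real.sqrt ((Real.cos θ - 1/2)^2 + (Real.sin θ - 0)^2) from
        dist_pt _ _ _ _]
      rw [Real.lt_sqrt (by norm_num)]
      nlinarith
    -- pick a point near M inside interior T and outside the ball
    set d := dist M c with hd
    set n := ‖z - M‖ with hn
    set t : ℝ := min 1 ((d - 1/2) / (n + 1)) with ht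
    have hn0 : 0 ≤ n := norm_nonneg _
    have ht0 : 0 < t := lt_min one_pos (div_pos (by linarith) (by positivity))
    have ht1 : t ≤ 1 := min_le_left _ _
    have hw : M + t • (z - M) ∈ interior T := by
      refine hconv.add_smul_mem_interior hMT ?_ ⟨ht0, ht1⟩
      simpa using hz
    have hdist : dist (M + t • (z - M)) M = t * n := by
      rw [dist_eq_norm]
      simp [norm_smul, abs_of_pos ht0, hn]
    have hout : M + t • (z - M) ∉ Metric.closedBall c (1/2) := by
      rw [Metric.mem_closedBall, not_le]
      have h1 : t * n < d - 1/2 := by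
        calc t * n ≤ ((d - 1/2) / (n + 1)) * n := by
              apply mul_le_mul_of_nonneg_right (min_le_right _ _) hn0
          _ < d - 1/2 := by
              rw [div_mul_eq_mul_div, div_lt_iff₀ (by positivity)]
              nlinarith [sub_pos.mpr dMc]
      have h2 := dist_triangle M (M + t • (z - M)) c
      rw [dist_comm M (M + t • (z - M)), hdist] at h2
      linarith
    have hsub : interior T ∩ (Metric.closedBall c (1/2))ᶜ ⊆
        T \ Metric.closedBall c (1/2) := fun x hx => ⟨interior_subset hx.1, hx.2⟩
    refine lt_of_lt_of_le ?_ (measure_mono hsub)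
    exact (isOpen_interior.inter Metric.isClosed_closedBall.isOpen_compl).measure_pos
      volume ⟨_, hw, hout⟩
end
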